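/- Let z₀, z₁, z₂, z₃ ∈ ℝ³ be affinely independent points, let K be their convex hull, let vol(K) denote its Lebesgue measure, and let φ : ℝ³ → ℝ³ be an affine map. Then ∫_K ‖φ(x)‖² dx ≤ (vol(K)/4) * ∑_{i=0}^{3} ‖φ(z_i)‖² ≤ 5 * ∫_K ‖φ(x)‖² dx. -/

import Mathlib

open scoped BigOperators
open MeasureTheory

noncomputable section

/-- ℝ³ with the Euclidean norm, inner product and Lebesgue measure. -/
abbrev R3 := EuclideanSpace ℝ (Fin 3)

section Aux


/-- antiderivative evaluation for quartic polynomials -/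
lemma poly_ftc (p q r s t lo hi : ℝ) :
    ∫ x in lo..hi, (p + q*x + r*x^2 + s*x^3 + t*x^4) =
      (p*hi + q*hi^2/2 + r*hi^3/3 + s*hi^4/4 + t*hi^5/5)
      - (p*lo + q*lo^2/2 + r*lo^3/3 + s*lo^4/4 + t*lo^5/5) := by
  have h : ∀ x ∈ Set.uIcc lo hi,
      HasDerivAt (fun x : ℝ => p*x + q*x^2/2 + r*x^3/3 + s*x^4/4 + t*x^5/5)
        (p + q*x + r*x^2 + s*x^3 + t*x^4) x := by
    intro x _
    have h1 : HasDerivAt (fun x : ℝ => p*x) (p*1) x := (hasDerivAt_id x).const_mul p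
    have h2 : HasDerivAt (fun x : ℝ => q*x^2/2) (q*(2*x^1)/2) x :=
      ((hasDerivAt_pow 2 x).const_mul q).div_const 2
    have h3 : HasDerivAt (fun x : ℝ => r*x^3/3) (r*(3*x^2)/3) x :=
      ((hasDerivAt_pow 3 x).const_mul r).div_const 3
    have h4 : HasDerivAt (fun x : ℝ => s*x^4/4) (s*(4*x^3)/4) x :=
      ((hasDerivAt_pow 4 x).const_mul s).div_const 4
    have h5 : HasDerivAt (fun x : ℝ => t*x^5/5) (t*(5*x^4)/5) x :=
      ((hasDerivAt_pow 5 x).const_mul t).div_const 5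
    have H := (((h1.add h2).add h3).add h4).add h5
    have e : p*1 + q*(2*x^1)/2 + r*(3*x^2)/3 + s*(4*x^3)/4 + t*(5*x^4)/5
        = p + q*x + r*x^2 + s*x^3 + t*x^4 := by ring
    rw [e] at H
    exact H
  rw [intervalIntegral.integral_eq_sub_of_hasDerivAt h (by
    apply Continuous.intervalIntegrable; continuity)]

/-- slicing a set integral over a product -/
lemma setIntegral_prod_slice {β : Type*} [MeasureSpace β] [SigmaFinite (volume : Measure β)]
    (T : Set (ℝ × β)) (hT : MeasurableSet T) (h : ℝ × β → ℝ)
    (hint : IntegrableOn h T) :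
    ∫ z in T, h z = ∫ a : ℝ, ∫ q in {q | (a, q) ∈ T}, h (a, q) := by
  have h1 : Integrable (T.indicator h)
      ((volume : Measure ℝ).prod (volume : Measure β)) := by
    rw [← Measure.volume_eq_prod]
    rwa [integrable_indicator_iff hT]
  calc ∫ z in T, h z = ∫ z, T.indicator h z := (integral_indicator hT).symm
    _ = ∫ a, ∫ q, T.indicator h (a, q) := by
        rw [Measure.volume_eq_prod, integral_prod _ h1]
    _ = ∫ a, ∫ q in {q | (a,q) ∈ T}, h (a,q) := by
        congr 1; funext a
        have e : ∀ q, T.indicator h (a,q)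
            = Set.indicator {q | (a,q) ∈ T} (fun q => h (a,q)) q := fun q => rfl
        simp_rw [e]
        exact integral_indicator (measurable_prodMk_left hT)

lemma integral_eq_intervalIntegral {F : ℝ → ℝ} {lo hi : ℝ} (hle : lo ≤ hi)
    (h0 : ∀ a, a ∉ Set.Icc lo hi → F a = 0) :
    ∫ a, F a = ∫ a in lo..hi, F a := by
  rw [intervalIntegral.integral_of_le hle, ← integral_Icc_eq_integral_Ioc,
    setIntegral_eq_integral_of_forall_compl_eq_zero h0]



def T3 : Set (ℝ × (ℝ × ℝ)) :=
  {p | 0 ≤ p.1 ∧ 0 ≤ p.2.1 ∧ 0 ≤ p.2.2 ∧ p.1 + p.2.1 + p.2.2 ≤ 1}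

def T2 (a : ℝ) : Set (ℝ × ℝ) := {q | 0 ≤ q.1 ∧ 0 ≤ q.2 ∧ a + q.1 + q.2 ≤ 1}

lemma T3_closed : IsClosed T3 := by
  have c1 : Continuous fun p : ℝ × (ℝ × ℝ) => p.1 := continuous_fst
  have c2 : Continuous fun p : ℝ × (ℝ × ℝ) => p.2.1 := continuous_fst.comp continuous_snd
  have c3 : Continuous fun p : ℝ × (ℝ × ℝ) => p.2.2 := continuous_snd.comp continuous_snd
  have : T3 = {p | 0 ≤ p.1} ∩ ({p | 0 ≤ p.2.1} ∩ ({p | 0 ≤ p.2.2}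
      ∩ {p : ℝ × (ℝ × ℝ) | p.1 + p.2.1 + p.2.2 ≤ 1})) := by
    ext p; simp [T3, Set.mem_setOf_eq, and_assoc]
  rw [this]
  exact (isClosed_le continuous_const c1).inter ((isClosed_le continuous_const c2).inter
    ((isClosed_le continuous_const c3).inter
      (isClosed_le ((c1.add c2).add c3) continuous_const)))

lemma T3_compact : IsCompact T3 := by
  refine IsCompact.of_isClosed_subset
    ((isCompact_Icc (a := (0:ℝ)) (b := 1)).prod
      ((isCompact_Icc (a := (0:ℝ)) (b := 1)).prod (isCompact_Icc (a := (0:ℝ)) (b := 1))))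
    T3_closed ?_
  rintro ⟨a, b, c⟩ ⟨h1, h2, h3, h4⟩
  exact ⟨⟨h1, by linarith⟩, ⟨h2, by linarith⟩, ⟨h3, by linarith⟩⟩

lemma T2_closed (a : ℝ) : IsClosed (T2 a) := by
  have c1 : Continuous fun q : ℝ × ℝ => q.1 := continuous_fst
  have c2 : Continuous fun q : ℝ × ℝ => q.2 := continuous_snd
  have : T2 a = {q | 0 ≤ q.1} ∩ ({q | 0 ≤ q.2} ∩ {q : ℝ × ℝ | a + q.1 + q.2 ≤ 1}) := by
    ext q; simp [T2, Set.mem_setOf_eq, and_assoc]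
  rw [this]
  exact (isClosed_le continuous_const c1).inter ((isClosed_le continuous_const c2).inter
    (isClosed_le ((continuous_const.add c1).add c2) continuous_const))

lemma T2_compact (a : ℝ) (ha : 0 ≤ a) : IsCompact (T2 a) := by
  refine IsCompact.of_isClosed_subset
    ((isCompact_Icc (a := (0:ℝ)) (b := 1)).prod (isCompact_Icc (a := (0:ℝ)) (b := 1)))
    (T2_closed a) ?_
  rintro ⟨b, c⟩ ⟨h1, h2, h3⟩
  exact ⟨⟨h1, by linarith⟩, ⟨h2, by linarith⟩⟩

lemma triple_slice (f : ℝ → ℝ → ℝ → ℝ)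
    (hf : Continuous fun p : ℝ × (ℝ × ℝ) => f p.1 p.2.1 p.2.2) :
    ∫ z in T3, f z.1 z.2.1 z.2.2 =
      ∫ a in (0:ℝ)..1, ∫ b in (0:ℝ)..(1-a), ∫ c in (0:ℝ)..(1-a-b), f a b c := by
  have hT3m : MeasurableSet T3 := T3_closed.measurableSet
  have hint : IntegrableOn (fun z : ℝ × (ℝ × ℝ) => f z.1 z.2.1 z.2.2) T3 :=
    hf.continuousOn.integrableOn_compact T3_compact
  rw [setIntegral_prod_slice T3 hT3m _ hint]
  -- slice description
  have hslice : ∀ a : ℝ, {q : ℝ × ℝ | (a, q) ∈ T3} = if 0 ≤ a then T2 a else ∅ := by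
    intro a
    by_cases ha : 0 ≤ a
    · simp only [if_pos ha]
      ext q; simp [T3, T2, Set.mem_setOf_eq, ha, and_assoc]
    · simp only [if_neg ha]
      ext q; simp only [T3, Set.mem_setOf_eq, Set.mem_empty_iff_false, iff_false]
      intro h; exact ha h.1
  have hzero : ∀ a, a ∉ Set.Icc (0:ℝ) 1 →
      (∫ q in {q : ℝ × ℝ | (a, q) ∈ T3}, f a q.1 q.2) = 0 := by
    intro a ha
    rw [Set.mem_Icc, not_and_or] at ha
    rcases ha with ha | ha
    · push_neg at ha
      rw [hslice a, if_neg (not_le.2 ha)]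
      simp
    · push_neg at ha
      have : {q : ℝ × ℝ | (a, q) ∈ T3} = ∅ := by
        ext q; simp only [T3, Set.mem_setOf_eq, Set.mem_empty_iff_false, iff_false]
        rintro ⟨h1, h2, h3, h4⟩; linarith
      rw [this]; simp
  rw [integral_eq_intervalIntegral (by norm_num) hzero]
  apply intervalIntegral.integral_congr
  intro a ha
  rw [Set.uIcc_of_le (by norm_num : (0:ℝ) ≤ 1)] at ha
  dsimp only
  rw [hslice a, if_pos ha.1]
  -- second level
  have hint2 : IntegrableOn (fun q : ℝ × ℝ => f a q.1 q.2) (T2 a) :=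
    (hf.comp (by continuity : Continuous fun q : ℝ × ℝ =>
      ((a, q) : ℝ × (ℝ × ℝ)))).continuousOn.integrableOn_compact (T2_compact a ha.1)
  rw [setIntegral_prod_slice (T2 a) (T2_closed a).measurableSet _ hint2]
  have hslice2 : ∀ b : ℝ, b ∈ Set.Icc (0:ℝ) (1-a) →
      {c : ℝ | (b, c) ∈ T2 a} = Set.Icc 0 (1 - a - b) := by
    intro b hb
    ext c; simp only [T2, Set.mem_setOf_eq, Set.mem_Icc]
    constructor
    · rintro ⟨h1, h2, h3⟩; exact ⟨h2, by linarith⟩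
    · rintro ⟨h1, h2⟩; exact ⟨hb.1, h1, by linarith⟩
  have hzero2 : ∀ b, b ∉ Set.Icc (0:ℝ) (1-a) →
      (∫ c in {c : ℝ | (b, c) ∈ T2 a}, f a b c) = 0 := by
    intro b hb
    rw [Set.mem_Icc, not_and_or] at hb
    have : {c : ℝ | (b, c) ∈ T2 a} = ∅ := by
      ext c; simp only [T2, Set.mem_setOf_eq, Set.mem_empty_iff_false, iff_false]
      rintro ⟨h1, h2, h3⟩
      rcases hb with hb | hb <;> push_neg at hb <;> linarith
    rw [this]; simp
  rw [integral_eq_intervalIntegral (by linarith [ha.2] : (0:ℝ) ≤ 1 - a) hzero2]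
  apply intervalIntegral.integral_congr
  intro b hb
  rw [Set.uIcc_of_le (by linarith [ha.2] : (0:ℝ) ≤ 1 - a)] at hb
  dsimp only
  rw [hslice2 b hb, integral_Icc_eq_integral_Ioc,
    ← intervalIntegral.integral_of_le (by linarith [hb.2] : (0:ℝ) ≤ 1 - a - b)]



set_option maxHeartbeats 2000000 in
lemma quad_integral (C W0 W1 W2 : ℝ) :
    ∫ z in T3, (C + W0*z.1 + W1*z.2.1 + W2*z.2.2)^2
      = C^2/6 + C*(W0+W1+W2)/12
        + (W0^2+W1^2+W2^2)/60 + (W0*W1+W0*W2+W1*W2)/60 := by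
  have hc : Continuous fun p : ℝ × (ℝ × ℝ) =>
      (C + W0*p.1 + W1*p.2.1 + W2*p.2.2)^2 := by
    apply Continuous.pow
    exact ((continuous_const.add (continuous_const.mul continuous_fst)).add
      (continuous_const.mul (continuous_fst.comp continuous_snd))).add
      (continuous_const.mul (continuous_snd.comp continuous_snd))
  have h := triple_slice (fun a b c => (C + W0*a + W1*b + W2*c)^2) hc
  rw [h]
  have L1 : ∀ a b : ℝ, (∫ c in (0:ℝ)..(1-a-b), (C + W0*a + W1*b + W2*c)^2)
      = (((1:ℝ)/3)*W2^2 + (-1:ℝ)*W2^2*a + (1:ℝ)*W2^2*a^2 + ((-1:ℝ)/3)*W2^2*a^3 + (1:ℝ)*W0*W2*a + (-2:ℝ)*W0*W2*a^2 + (1:ℝ)*W0*W2*a^3 + (1:ℝ)*W0^2*a^2 + (-1:ℝ)*W0^2*a^3 + (1:ℝ)*C*W2 + (-2:ℝ)*C*W2*a + (1:ℝ)*C*W2*a^2 + (2:ℝ)*C*W0*a + (-2:ℝ)*C*W0*a^2 + (1:ℝ)*C^2 + (-1:ℝ)*C^2*a) + ((-1:ℝ)*W2^2 + (2:ℝ)*W2^2*a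 + (-1:ℝ)*W2^2*a^2 + (1:ℝ)*W1*W2 + (-2:ℝ)*W1*W2*a + (1:ℝ)*W1*W2*a^2 + (-2:ℝ)*W0*W2*a + (2:ℝ)*W0*W2*a^2 + (2:ℝ)*W0*W1*a + (-2:ℝ)*W0*W1*a^2 + (-1:ℝ)*W0^2*a^2 + (-2:ℝ)*C*W2 + (2:ℝ)*C*W2*a + (2:ℝ)*C*W1 + (-2:ℝ)*C*W1*a + (-2:ℝ)*C*W0*a + (-1:ℝ)*C^2)*b + ((1:ℝ)*W2^2 + (-1:ℝ)*W2^2*a + (-2:ℝ)*W1*W2 + (2:ℝ)*W1*W2*a + (1:ℝ)*W1^2 + (-1:ℝ)*W1^2*a + (1:ℝ)*W0*W2*a + (-2:ℝ)*W0*W1*a + (1:ℝ)*C*W2 + (-2:ℝ)*C*W1)*b^2 + (((-1:ℝ)/3)*W2^2 + (1:ℝ)*W1*W2 + (-1:ℝ)*W1^2)*b^3 := by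
    intro a b
    rw [show (fun c : ℝ => (C + W0*a + W1*b + W2*c)^2)
        = (fun c : ℝ => ((C + W0*a + W1*b)^2) + (2*(C + W0*a + W1*b)*W2)*c
            + (W2^2)*c^2 + 0*c^3 + 0*c^4) from by funext c; ring,
      poly_ftc]
    ring
  have L2 : ∀ a : ℝ, (∫ b in (0:ℝ)..(1-a), ((((1:ℝ)/3)*W2^2 + (-1:ℝ)*W2^2*a + (1:ℝ)*W2^2*a^2 + ((-1:ℝ)/3)*W2^2*a^3 + (1:ℝ)*W0*W2*a + (-2:ℝ)*W0*W2*a^2 + (1:ℝ)*W0*W2*a^3 + (1:ℝ)*W0^2*a^2 + (-1:ℝ)*W0^2*a^3 + (1:ℝ)*C*W2 + (-2:ℝ)*C*W2*a + (1:ℝ)*C*W2*a^2 + (2:ℝ)*C*W0*a + (-2:ℝ)*C*W0*a^2 + (1:ℝ)*C^2 + (-1:ℝ)*C^2*a) + ((-1:ℝ)*W2^2 + (2:ℝ)*W2^2*a + (-1:ℝ)*W2^2*a^2 + (1:ℝ)*W1*W2 + (-2:ℝ)*W1*W2*a + (1:ℝ)*W1*W2*a^2 + (-2:ℝ)*W0*W2*a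 + (2:ℝ)*W0*W2*a^2 + (2:ℝ)*W0*W1*a + (-2:ℝ)*W0*W1*a^2 + (-1:ℝ)*W0^2*a^2 + (-2:ℝ)*C*W2 + (2:ℝ)*C*W2*a + (2:ℝ)*C*W1 + (-2:ℝ)*C*W1*a + (-2:ℝ)*C*W0*a + (-1:ℝ)*C^2)*b + ((1:ℝ)*W2^2 + (-1:ℝ)*W2^2*a + (-2:ℝ)*W1*W2 + (2:ℝ)*W1*W2*a + (1:ℝ)*W1^2 + (-1:ℝ)*W1^2*a + (1:ℝ)*W0*W2*a + (-2:ℝ)*W0*W1*a + (1:ℝ)*C*W2 + (-2:ℝ)*C*W1)*b^2 + (((-1:ℝ)/3)*W2^2 + (1:ℝ)*W1*W2 + (-1:ℝ)*W1^2)*b^3))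
      = (((1:ℝ)/12)*W2^2 + ((1:ℝ)/12)*W1*W2 + ((1:ℝ)/12)*W1^2 + ((1:ℝ)/3)*C*W2 + ((1:ℝ)/3)*C*W1 + ((1:ℝ)/2)*C^2) + (((-1:ℝ)/3)*W2^2 + ((-1:ℝ)/3)*W1*W2 + ((-1:ℝ)/3)*W1^2 + ((1:ℝ)/3)*W0*W2 + ((1:ℝ)/3)*W0*W1 + (-1:ℝ)*C*W2 + (-1:ℝ)*C*W1 + (1:ℝ)*C*W0 + (-1:ℝ)*C^2)*a + (((1:ℝ)/2)*W2^2 + ((1:ℝ)/2)*W1*W2 + ((1:ℝ)/2)*W1^2 + (-1:ℝ)*W0*W2 + (-1:ℝ)*W0*W1 + ((1:ℝ)/2)*W0^2 + (1:ℝ)*C*W2 + (1:ℝ)*C*W1 + (-2:ℝ)*C*W0 + ((1:ℝ)/2)*C^2)*a^2 + (((-1:ℝ)/3)*W2^2 + ((-1:ℝ)/3)*W1*W2 + ((-1:ℝ)/3)*W1^2 + (1:ℝ)*W0*W2 + (1:ℝ)*W0*W1 + (-1:ℝ)*W0^2 + ((-1:ℝ)/3)*C*W2 + ((-1:ℝ)/3)*C*W1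 + (1:ℝ)*C*W0)*a^3 + (((1:ℝ)/12)*W2^2 + ((1:ℝ)/12)*W1*W2 + ((1:ℝ)/12)*W1^2 + ((-1:ℝ)/3)*W0*W2 + ((-1:ℝ)/3)*W0*W1 + ((1:ℝ)/2)*W0^2)*a^4 := by
    intro a
    rw [show (fun b : ℝ => (((1:ℝ)/3)*W2^2 + (-1:ℝ)*W2^2*a + (1:ℝ)*W2^2*a^2 + ((-1:ℝ)/3)*W2^2*a^3 + (1:ℝ)*W0*W2*a + (-2:ℝ)*W0*W2*a^2 + (1:ℝ)*W0*W2*a^3 + (1:ℝ)*W0^2*a^2 + (-1:ℝ)*W0^2*a^3 + (1:ℝ)*C*W2 + (-2:ℝ)*C*W2*a + (1:ℝ)*C*W2*a^2 + (2:ℝ)*C*W0*a + (-2:ℝ)*C*W0*a^2 + (1:ℝ)*C^2 + (-1:ℝ)*C^2*a) + ((-1:ℝ)*W2^2 + (2:ℝ)*W2^2*a + (-1:ℝ)*W2^2*a^2 + (1:ℝ)*W1*W2 + (-2:ℝ)*W1*W2*a + (1:ℝ)*W1*W2*a^2 + (-2:ℝ)*W0*W2*a + (2:ℝ)*W0*W2*a^2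 + (2:ℝ)*W0*W1*a + (-2:ℝ)*W0*W1*a^2 + (-1:ℝ)*W0^2*a^2 + (-2:ℝ)*C*W2 + (2:ℝ)*C*W2*a + (2:ℝ)*C*W1 + (-2:ℝ)*C*W1*a + (-2:ℝ)*C*W0*a + (-1:ℝ)*C^2)*b + ((1:ℝ)*W2^2 + (-1:ℝ)*W2^2*a + (-2:ℝ)*W1*W2 + (2:ℝ)*W1*W2*a + (1:ℝ)*W1^2 + (-1:ℝ)*W1^2*a + (1:ℝ)*W0*W2*a + (-2:ℝ)*W0*W1*a + (1:ℝ)*C*W2 + (-2:ℝ)*C*W1)*b^2 + (((-1:ℝ)/3)*W2^2 + (1:ℝ)*W1*W2 + (-1:ℝ)*W1^2)*b^3)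
        = (fun b : ℝ => (((1:ℝ)/3)*W2^2 + (-1:ℝ)*W2^2*a + (1:ℝ)*W2^2*a^2 + ((-1:ℝ)/3)*W2^2*a^3 + (1:ℝ)*W0*W2*a + (-2:ℝ)*W0*W2*a^2 + (1:ℝ)*W0*W2*a^3 + (1:ℝ)*W0^2*a^2 + (-1:ℝ)*W0^2*a^3 + (1:ℝ)*C*W2 + (-2:ℝ)*C*W2*a + (1:ℝ)*C*W2*a^2 + (2:ℝ)*C*W0*a + (-2:ℝ)*C*W0*a^2 + (1:ℝ)*C^2 + (-1:ℝ)*C^2*a) + ((-1:ℝ)*W2^2 + (2:ℝ)*W2^2*a + (-1:ℝ)*W2^2*a^2 + (1:ℝ)*W1*W2 + (-2:ℝ)*W1*W2*a + (1:ℝ)*W1*W2*a^2 + (-2:ℝ)*W0*W2*a + (2:ℝ)*W0*W2*a^2 + (2:ℝ)*W0*W1*a + (-2:ℝ)*W0*W1*a^2 + (-1:ℝ)*W0^2*a^2 + (-2:ℝ)*C*W2 + (2:ℝ)*C*W2*a + (2:ℝ)*C*W1 + (-2:ℝ)*C*W1*a + (-2:ℝ)*C*W0*a + (-1:ℝ)*C^2)*b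 + ((1:ℝ)*W2^2 + (-1:ℝ)*W2^2*a + (-2:ℝ)*W1*W2 + (2:ℝ)*W1*W2*a + (1:ℝ)*W1^2 + (-1:ℝ)*W1^2*a + (1:ℝ)*W0*W2*a + (-2:ℝ)*W0*W1*a + (1:ℝ)*C*W2 + (-2:ℝ)*C*W1)*b^2 + (((-1:ℝ)/3)*W2^2 + (1:ℝ)*W1*W2 + (-1:ℝ)*W1^2)*b^3 + 0*b^4)
          from by funext b; ring,
      poly_ftc]
    ring
  simp_rw [L1, L2]
  rw [show (fun a : ℝ => (((1:ℝ)/12)*W2^2 + ((1:ℝ)/12)*W1*W2 + ((1:ℝ)/12)*W1^2 + ((1:ℝ)/3)*C*W2 + ((1:ℝ)/3)*C*W1 + ((1:ℝ)/2)*C^2) + (((-1:ℝ)/3)*W2^2 + ((-1:ℝ)/3)*W1*W2 + ((-1:ℝ)/3)*W1^2 + ((1:ℝ)/3)*W0*W2 + ((1:ℝ)/3)*W0*W1 + (-1:ℝ)*C*W2 + (-1:ℝ)*C*W1 + (1:ℝ)*C*W0 + (-1:ℝ)*C^2)*a + (((1:ℝ)/2)*W2^2 + ((1:ℝ)/2)*W1*W2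 + ((1:ℝ)/2)*W1^2 + (-1:ℝ)*W0*W2 + (-1:ℝ)*W0*W1 + ((1:ℝ)/2)*W0^2 + (1:ℝ)*C*W2 + (1:ℝ)*C*W1 + (-2:ℝ)*C*W0 + ((1:ℝ)/2)*C^2)*a^2 + (((-1:ℝ)/3)*W2^2 + ((-1:ℝ)/3)*W1*W2 + ((-1:ℝ)/3)*W1^2 + (1:ℝ)*W0*W2 + (1:ℝ)*W0*W1 + (-1:ℝ)*W0^2 + ((-1:ℝ)/3)*C*W2 + ((-1:ℝ)/3)*C*W1 + (1:ℝ)*C*W0)*a^3 + (((1:ℝ)/12)*W2^2 + ((1:ℝ)/12)*W1*W2 + ((1:ℝ)/12)*W1^2 + ((-1:ℝ)/3)*W0*W2 + ((-1:ℝ)/3)*W0*W1 + ((1:ℝ)/2)*W0^2)*a^4)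
      = (fun a : ℝ => (((1:ℝ)/12)*W2^2 + ((1:ℝ)/12)*W1*W2 + ((1:ℝ)/12)*W1^2 + ((1:ℝ)/3)*C*W2 + ((1:ℝ)/3)*C*W1 + ((1:ℝ)/2)*C^2) + (((-1:ℝ)/3)*W2^2 + ((-1:ℝ)/3)*W1*W2 + ((-1:ℝ)/3)*W1^2 + ((1:ℝ)/3)*W0*W2 + ((1:ℝ)/3)*W0*W1 + (-1:ℝ)*C*W2 + (-1:ℝ)*C*W1 + (1:ℝ)*C*W0 + (-1:ℝ)*C^2)*a + (((1:ℝ)/2)*W2^2 + ((1:ℝ)/2)*W1*W2 + ((1:ℝ)/2)*W1^2 + (-1:ℝ)*W0*W2 + (-1:ℝ)*W0*W1 + ((1:ℝ)/2)*W0^2 + (1:ℝ)*C*W2 + (1:ℝ)*C*W1 + (-2:ℝ)*C*W0 + ((1:ℝ)/2)*C^2)*a^2 + (((-1:ℝ)/3)*W2^2 + ((-1:ℝ)/3)*W1*W2 + ((-1:ℝ)/3)*W1^2 + (1:ℝ)*W0*W2 + (1:ℝ)*W0*W1 + (-1:ℝ)*W0^2 + ((-1:ℝ)/3)*C*W2 +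 ((-1:ℝ)/3)*C*W1 + (1:ℝ)*C*W0)*a^3 + (((1:ℝ)/12)*W2^2 + ((1:ℝ)/12)*W1*W2 + ((1:ℝ)/12)*W1^2 + ((-1:ℝ)/3)*W0*W2 + ((-1:ℝ)/3)*W0*W1 + ((1:ℝ)/2)*W0^2)*a^4)
        from by funext a; ring,
    poly_ftc]
  ring

lemma one_integral : (∫ z in T3, (1:ℝ)) = 1/6 := by
  have hc : Continuous fun _ : ℝ × (ℝ × ℝ) => (1:ℝ) := continuous_const
  have h := triple_slice (fun _ _ _ => (1:ℝ)) hc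
  rw [h]
  have L1 : ∀ a b : ℝ, (∫ c in (0:ℝ)..(1-a-b), (1:ℝ)) = (1 - a - b) := by
    intro a b
    simp
  have L2 : ∀ a : ℝ, (∫ b in (0:ℝ)..(1-a), (1 - a - b)) = (1-a)^2/2 := by
    intro a
    rw [show (fun b : ℝ => 1 - a - b)
        = (fun b : ℝ => (1-a) + (-1)*b + 0*b^2 + 0*b^3 + 0*b^4) from by funext b; ring,
      poly_ftc]
    ring
  simp_rw [L1, L2]
  rw [show (fun a : ℝ => (1-a)^2/2)
      = (fun a : ℝ => (1/2 : ℝ) + (-1)*a + (1/2)*a^2 + 0*a^3 + 0*a^4) from by funext a; ring,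
    poly_ftc]
  ring

abbrev R3' := EuclideanSpace ℝ (Fin 3)

def E3 : R3' ≃ᵐ ℝ × (ℝ × ℝ) :=
  (MeasurableEquiv.toLp 2 (Fin 3 → ℝ)).symm.trans
    ((MeasurableEquiv.piFinSuccAbove (fun _ : Fin 3 => ℝ) 0).trans
      (MeasurableEquiv.prodCongr (MeasurableEquiv.refl ℝ) MeasurableEquiv.finTwoArrow))

lemma E3_mp : MeasurePreserving E3 volume volume := by
  have h1 := EuclideanSpace.volume_preserving_symm_measurableEquiv_toLp (Fin 3)
  have h2 := volume_preserving_piFinSuccAbove (fun _ : Fin 3 => ℝ) 0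
  have h3 : MeasurePreserving
      (⇑(MeasurableEquiv.prodCongr (MeasurableEquiv.refl ℝ)
        (MeasurableEquiv.finTwoArrow (α := ℝ)))) volume volume :=
    (MeasurePreserving.id (volume : Measure ℝ)).prod (volume_preserving_finTwoArrow ℝ)
  exact (h3.comp h2).comp h1

lemma E3_apply (y : R3') : E3 y = (y 0, (y 1, y 2)) := rfl

def Sset : Set R3' := {y | (∀ i, 0 ≤ y i) ∧ ∑ i, y i ≤ 1}

lemma Sset_eq_preimage : Sset = E3 ⁻¹' T3 := by
  ext y
  simp only [Sset, T3, Set.mem_setOf_eq, Set.mem_preimage, E3_apply, Fin.sum_univ_three]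
  constructor
  · rintro ⟨h, hs⟩
    exact ⟨h 0, h 1, h 2, hs⟩
  · rintro ⟨h0, h1, h2, hs⟩
    refine ⟨fun i => ?_, hs⟩
    fin_cases i <;> assumption

lemma transfer (H : ℝ → ℝ → ℝ → ℝ) :
    (∫ y in Sset, H (y 0) (y 1) (y 2)) = ∫ z in T3, H z.1 z.2.1 z.2.2 := by
  rw [Sset_eq_preimage,
    ← E3_mp.setIntegral_preimage_emb E3.measurableEmbedding
      (fun z => H z.1 z.2.1 z.2.2) T3]
  rfl

lemma Sset_convex : Convex ℝ Sset := by
  intro x hx y hy s t hs ht hst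
  constructor
  · intro i
    have : (s • x + t • y) i = s * x i + t * y i := rfl
    rw [this]
    exact add_nonneg (mul_nonneg hs (hx.1 i)) (mul_nonneg ht (hy.1 i))
  · have : ∑ i, (s • x + t • y) i = s * ∑ i, x i + t * ∑ i, y i := by
      rw [Finset.mul_sum, Finset.mul_sum, ← Finset.sum_add_distrib]
      rfl
    rw [this]
    calc s * ∑ i, x i + t * ∑ i, y i ≤ s * 1 + t * 1 := by
          gcongr
          · exact hx.2
          · exact hy.2
      _ = 1 := by rw [mul_one, mul_one, hst]

/-- vertices of the reference simplex -/
def zhat : Fin 4 → R3' := Fin.cons 0 (fun k => EuclideanSpace.single k 1)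

lemma convexHull_zhat : convexHull ℝ (Set.range zhat) = Sset := by
  apply le_antisymm
  · apply convexHull_min _ Sset_convex
    rintro _ ⟨i, rfl⟩
    induction i using Fin.cases with
    | zero =>
        constructor
        · intro j; simp [zhat]
        · simp [zhat]
    | succ k =>
        constructor
        · intro j
          simp only [zhat, Fin.cons_succ, EuclideanSpace.single_apply]
          positivity
        · simp only [zhat, Fin.cons_succ]
          have : ∑ i : Fin 3, (EuclideanSpace.single k (1:ℝ)) i = 1 := by
            simp [EuclideanSpace.single_apply]
          rw [this]
  · intro y hy
    have key : ∑ i : Fin 4, (Fin.cons (1 - ∑ j, y j) (fun k => y k) : Fin 4 → ℝ) i • zhat i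
        = y := by
      rw [Fin.sum_univ_succ]
      simp only [Fin.cons_zero, Fin.cons_succ, zhat]
      rw [smul_zero, zero_add]
      ext j
      have : (∑ k : Fin 3, y k • EuclideanSpace.single k (1:ℝ)) j
          = ∑ k : Fin 3, y k • (EuclideanSpace.single k (1:ℝ)) j := by
        induction (Finset.univ : Finset (Fin 3)) using Finset.induction with
        | empty => rfl
        | insert _ _ h ih => rw [Finset.sum_insert h, Finset.sum_insert h, ← ih]; rfl
      rw [this]
      simp [EuclideanSpace.single_apply]
    rw [← key]
    apply Convex.sum_mem (convex_convexHull ℝ _)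
    · intro i _
      induction i using Fin.cases with
      | zero => simpa using by linarith [hy.2]
      | succ k => simpa using hy.1 k
    · rw [Fin.sum_univ_succ]
      simp
    · intro i _
      exact subset_convexHull ℝ _ ⟨i, rfl⟩

lemma R3_sum_apply {α : Type*} (s : Finset α) (v : α → R3') (i : Fin 3) :
    (∑ k ∈ s, v k) i = ∑ k ∈ s, v k i := by
  classical
  induction s using Finset.induction with
  | empty => rfl
  | insert _ _ h ih => rw [Finset.sum_insert h, Finset.sum_insert h, ← ih]; rfl

lemma norm_sq_R3 (v : R3') : ‖v‖^2 = ∑ i, (v i)^2 := by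
  rw [EuclideanSpace.norm_eq, Real.sq_sqrt (by positivity)]
  simp [sq_abs]

lemma scalar_up (c w0 w1 w2 : ℝ) :
    c^2/6 + c*(w0+w1+w2)/12 + (w0^2+w1^2+w2^2)/60 + (w0*w1+w0*w2+w1*w2)/60
      ≤ (1/24)*(c^2 + (c+w0)^2 + (c+w1)^2 + (c+w2)^2) := by
  nlinarith [sq_nonneg (w0-w1), sq_nonneg (w0-w2), sq_nonneg (w1-w2),
    sq_nonneg w0, sq_nonneg w1, sq_nonneg w2]

lemma scalar_lo (c w0 w1 w2 : ℝ) :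
    (1/24)*(c^2 + (c+w0)^2 + (c+w1)^2 + (c+w2)^2)
      ≤ 5*(c^2/6 + c*(w0+w1+w2)/12 + (w0^2+w1^2+w2^2)/60 + (w0*w1+w0*w2+w1*w2)/60) := by
  nlinarith [sq_nonneg (4*c+w0+w1+w2)]

variable (z : Fin 4 → R3')

/-- edge vectors -/
def wv : Fin 3 → R3' := fun k => z k.succ - z 0

/-- the linear part of the reference map -/
def Lz : R3' →ₗ[ℝ] R3' := (EuclideanSpace.basisFun (Fin 3) ℝ).toBasis.constr ℝ (wv z)

lemma Lz_apply (y : R3') : Lz z y = ∑ k, y k • wv z k := by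
  rw [Lz, Module.Basis.constr_apply_fintype]
  refine Finset.sum_congr rfl fun k _ => ?_
  have h : ((EuclideanSpace.basisFun (Fin 3) ℝ).toBasis).equivFun y k = y k := by
    simp [Module.Basis.equivFun_apply, OrthonormalBasis.coe_toBasis_repr_apply]
    try rfl
  rw [h]

/-- the affine reference map -/
def Az : R3' →ᵃ[ℝ] R3' :=
  AffineMap.mk' (fun y => z 0 + Lz z y) (Lz z) 0
    (by
      intro p
      simp only [vsub_eq_sub, sub_zero, vadd_eq_add, map_zero, add_zero]
      exact add_comm _ _)

lemma Az_coe : ⇑(Az z) = fun y => z 0 + Lz z y := by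
  rw [Az]; exact AffineMap.coe_mk' _ _ _ _

lemma Az_apply (y : R3') : Az z y = z 0 + Lz z y := by
  rw [Az_coe]

set_option maxHeartbeats 1000000 in
lemma wv_li (hz : AffineIndependent ℝ z) : LinearIndependent ℝ (wv z) := by
  have h := (affineIndependent_iff_linearIndependent_vsub ℝ z 0).mp hz
  have hinj : Function.Injective (fun k : Fin 3 => (⟨k.succ, Fin.succ_ne_zero k⟩ :
      {x : Fin 4 // x ≠ 0})) := by
    intro a b hab
    exact Fin.succ_injective 3 (congrArg Subtype.val hab)
  exact h.comp (fun k : Fin 3 => (⟨k.succ, Fin.succ_ne_zero k⟩ : {x : Fin 4 // x ≠ 0})) hinj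

lemma Lz_inj (hz : AffineIndependent ℝ z) : Function.Injective (Lz z) := by
  have h0 : ∀ y : R3', Lz z y = 0 → y = 0 := by
    intro y hy
    rw [Lz_apply] at hy
    have := linearIndependent_iff'.mp (wv_li z hz) Finset.univ (fun k => y k) hy
    ext i
    exact this i (Finset.mem_univ i)
  intro y1 y2 h
  have h2 : Lz z (y1 - y2) = 0 := by rw [map_sub, h, sub_self]
  exact sub_eq_zero.mp (h0 _ h2)


lemma Az_zhat : ∀ i, Az z (zhat i) = z i := by
  intro i
  induction i using Fin.cases with
  | zero =>
      show Az z (zhat 0) = z 0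
      rw [show zhat 0 = 0 from rfl, Az_apply, map_zero, add_zero]
  | succ k =>
      rw [show zhat k.succ = EuclideanSpace.single k 1 from rfl, Az_apply]
      have hL : Lz z (EuclideanSpace.single k 1) = wv z k := by
        rw [Lz_apply]
        have : ∀ j : Fin 3, (EuclideanSpace.single k (1:ℝ)) j • wv z j
            = if j = k then wv z j else 0 := by
          intro j
          rw [EuclideanSpace.single_apply]
          by_cases h : j = k <;> simp [h]
        simp_rw [this]
        simp
      rw [hL, wv]
      abel

lemma hull_eq_image : convexHull ℝ (Set.range z) = ⇑(Az z) '' Sset := by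
  rw [← convexHull_zhat, AffineMap.image_convexHull, ← Set.range_comp,
    show ⇑(Az z) ∘ zhat = z from funext (Az_zhat z)]

def Qk (z : Fin 4 → R3') (φ : R3' →ᵃ[ℝ] R3') (k : Fin 3) : ℝ :=
  (φ (z 0) k)^2/6
  + (φ (z 0) k) * ((φ (z 1) - φ (z 0)) k + (φ (z 2) - φ (z 0)) k + (φ (z 3) - φ (z 0)) k)/12
  + (((φ (z 1) - φ (z 0)) k)^2 + ((φ (z 2) - φ (z 0)) k)^2 + ((φ (z 3) - φ (z 0)) k)^2)/60
  + ((φ (z 1) - φ (z 0)) k * (φ (z 2) - φ (z 0)) k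
     + (φ (z 1) - φ (z 0)) k * (φ (z 3) - φ (z 0)) k
     + (φ (z 2) - φ (z 0)) k * (φ (z 3) - φ (z 0)) k)/60

theorem stmt14' (z : Fin 4 → R3') (hz : AffineIndependent ℝ z)
    (φ : R3' →ᵃ[ℝ] R3') :
    (∫ x in convexHull ℝ (Set.range z), ‖φ x‖ ^ 2
        ≤ (volume (convexHull ℝ (Set.range z))).toReal / 4 * ∑ i : Fin 4, ‖φ (z i)‖ ^ 2) ∧
    ((volume (convexHull ℝ (Set.range z))).toReal / 4 * ∑ i : Fin 4, ‖φ (z i)‖ ^ 2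
        ≤ 5 * ∫ x in convexHull ℝ (Set.range z), ‖φ x‖ ^ 2) := by
  classical
  set CL : R3' →L[ℝ] R3' := LinearMap.toContinuousLinearMap (Lz z) with hCL
  have hSm : MeasurableSet Sset := by
    rw [Sset_eq_preimage]
    exact E3.measurable T3_closed.measurableSet
  have hderiv : ∀ x ∈ Sset, HasFDerivWithinAt (⇑(Az z)) CL Sset x := by
    intro x _
    have h1 : HasFDerivAt (fun y => z 0 + CL y) CL x := CL.hasFDerivAt.const_add (z 0)
    have h2 : ⇑(Az z) = fun y => z 0 + CL y := Az_coe z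
    rw [h2]
    exact h1.hasFDerivWithinAt
  have hinjOn : Set.InjOn (⇑(Az z)) Sset := by
    intro y1 _ y2 _ h
    apply Lz_inj z hz
    have h' : z 0 + Lz z y1 = z 0 + Lz z y2 := by
      rw [← Az_apply, ← Az_apply, h]
    exact add_left_cancel h'
  have hCoV : ∀ g : R3' → ℝ, (∫ x in convexHull ℝ (Set.range z), g x)
      = |CL.det| * ∫ y in Sset, g (Az z y) := by
    intro g
    rw [hull_eq_image z,
      integral_image_eq_integral_abs_det_fderiv_smul volume hSm hderiv hinjOn g]
    simp_rw [smul_eq_mul]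
    rw [integral_const_mul]
  have hd0 : (0:ℝ) ≤ |CL.det| := abs_nonneg _
  have hvol : (volume (convexHull ℝ (Set.range z))).toReal = |CL.det| * (1/6) := by
    have h1 : (∫ x in convexHull ℝ (Set.range z), (1:ℝ))
        = (volume (convexHull ℝ (Set.range z))).toReal := by
      rw [setIntegral_const, smul_eq_mul, mul_one, measureReal_def]
    rw [← h1, hCoV (fun _ => (1:ℝ))]
    congr 1
    have ht := transfer (fun _ _ _ => (1:ℝ))
    rw [ht, one_integral]
  have hφA : ∀ y : R3', ‖φ (Az z y)‖^2
      = ∑ k : Fin 3, (φ (z 0) k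
          + (φ (z 1) - φ (z 0)) k * y 0
          + (φ (z 2) - φ (z 0)) k * y 1
          + (φ (z 3) - φ (z 0)) k * y 2)^2 := by
    intro y
    have h1 : φ (Az z y) = φ (z 0) + ∑ j : Fin 3, y j • (φ (z j.succ) - φ (z 0)) := by
      have hA : Az z y = Lz z y +ᵥ z 0 := by rw [Az_apply]; exact add_comm _ _
      rw [hA, AffineMap.map_vadd, Lz_apply, map_sum]
      have hlin : ∀ j : Fin 3, φ.linear (y j • wv z j)
          = y j • (φ (z j.succ) - φ (z 0)) := by
        intro j
        rw [LinearMap.map_smul]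
        congr 1
        have h := AffineMap.linearMap_vsub φ (z j.succ) (z 0)
        rw [vsub_eq_sub, vsub_eq_sub] at h
        simp only [wv]
        exact h
      rw [Finset.sum_congr rfl (fun j _ => hlin j), vadd_eq_add, add_comm]
    rw [h1, norm_sq_R3]
    refine Finset.sum_congr rfl fun k _ => ?_
    have h2 : (φ (z 0) + ∑ j : Fin 3, y j • (φ (z j.succ) - φ (z 0))) k
        = φ (z 0) k + ∑ j : Fin 3, y j * (φ (z j.succ) - φ (z 0)) k := by
      calc (φ (z 0) + ∑ j : Fin 3, y j • (φ (z j.succ) - φ (z 0))) k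
          = φ (z 0) k + (∑ j : Fin 3, y j • (φ (z j.succ) - φ (z 0))) k := rfl
        _ = φ (z 0) k + ∑ j : Fin 3, (y j • (φ (z j.succ) - φ (z 0))) k := by
            rw [R3_sum_apply]
        _ = _ := rfl
    rw [h2, Fin.sum_univ_three]
    have e0 : (0 : Fin 3).succ = (1 : Fin 4) := rfl
    have e1 : (1 : Fin 3).succ = (2 : Fin 4) := rfl
    have e2 : (2 : Fin 3).succ = (3 : Fin 4) := rfl
    rw [e0, e1, e2]
    ring
  have hI : (∫ y in Sset, ‖φ (Az z y)‖^2) = ∑ k : Fin 3, Qk z φ k := by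
    simp_rw [hφA]
    have ht := transfer (fun a b c => ∑ k : Fin 3,
      (φ (z 0) k + (φ (z 1) - φ (z 0)) k * a + (φ (z 2) - φ (z 0)) k * b
        + (φ (z 3) - φ (z 0)) k * c)^2)
    simp only [] at ht
    rw [ht, MeasureTheory.integral_finset_sum]
    · refine Finset.sum_congr rfl fun k _ => ?_
      simp only [Qk]
      exact quad_integral _ _ _ _
    · intro k _
      apply ContinuousOn.integrableOn_compact T3_compact
      apply Continuous.continuousOn
      apply Continuous.pow
      exact ((continuous_const.add (continuous_const.mul continuous_fst)).add
        (continuous_const.mul (continuous_fst.comp continuous_snd))).add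
        (continuous_const.mul (continuous_snd.comp continuous_snd))
  have hmain : (∫ x in convexHull ℝ (Set.range z), ‖φ x‖^2)
      = |CL.det| * ∑ k : Fin 3, Qk z φ k := by
    have h := hCoV (fun x => ‖φ x‖^2)
    rw [h, hI]
  have hT : (∑ i : Fin 4, ‖φ (z i)‖^2)
      = ∑ k : Fin 3, ((φ (z 0) k)^2 + (φ (z 0) k + (φ (z 1) - φ (z 0)) k)^2
          + (φ (z 0) k + (φ (z 2) - φ (z 0)) k)^2
          + (φ (z 0) k + (φ (z 3) - φ (z 0)) k)^2) := by
    simp_rw [norm_sq_R3]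
    rw [Finset.sum_comm]
    refine Finset.sum_congr rfl fun k _ => ?_
    rw [Fin.sum_univ_four]
    have h1 : ∀ i : Fin 4, φ (z 0) k + (φ (z i) - φ (z 0)) k = φ (z i) k := by
      intro i
      have h : (φ (z i) - φ (z 0)) k = φ (z i) k - φ (z 0) k := rfl
      rw [h]; ring
    rw [h1 1, h1 2, h1 3]
  have hsum_up : (∑ k : Fin 3, Qk z φ k) ≤ (1/24) * ∑ i : Fin 4, ‖φ (z i)‖^2 := by
    rw [hT, Finset.mul_sum]
    refine Finset.sum_le_sum fun k _ => ?_
    simp only [Qk]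
    exact scalar_up _ _ _ _
  have hsum_lo : ((1:ℝ)/24) * (∑ i : Fin 4, ‖φ (z i)‖^2) ≤ 5 * ∑ k : Fin 3, Qk z φ k := by
    rw [hT, Finset.mul_sum, Finset.mul_sum]
    refine Finset.sum_le_sum fun k _ => ?_
    simp only [Qk]
    exact scalar_lo _ _ _ _
  constructor
  · rw [hmain, hvol]
    have e : |CL.det| * (1/6) / 4 * (∑ i : Fin 4, ‖φ (z i)‖^2)
        = |CL.det| * ((1/24) * ∑ i : Fin 4, ‖φ (z i)‖^2) := by ring
    rw [e]
    exact mul_le_mul_of_nonneg_left hsum_up hd0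
  · rw [hmain, hvol]
    have e : |CL.det| * (1/6) / 4 * (∑ i : Fin 4, ‖φ (z i)‖^2)
        = |CL.det| * ((1/24) * ∑ i : Fin 4, ‖φ (z i)‖^2) := by ring
    have e2 : 5 * (|CL.det| * ∑ k : Fin 3, Qk z φ k)
        = |CL.det| * (5 * ∑ k : Fin 3, Qk z φ k) := by ring
    rw [e, e2]
    exact mul_le_mul_of_nonneg_left hsum_lo hd0

end Aux

/-- elementwise mass-lumping norm equivalence on a tetrahedron: for
affinely independent `z₀, …, z₃` with convex hull `K` and an affine map `φ`,
`∫_K ‖φ‖² ≤ (vol K / 4) ∑ᵢ ‖φ(zᵢ)‖² ≤ 5 ∫_K ‖φ‖²`. -/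
theorem stmt14 (z : Fin 4 → R3) (hz : AffineIndependent ℝ z)
    (φ : R3 →ᵃ[ℝ] R3) :
    (∫ x in convexHull ℝ (Set.range z), ‖φ x‖ ^ 2
        ≤ (volume (convexHull ℝ (Set.range z))).toReal / 4 * ∑ i : Fin 4, ‖φ (z i)‖ ^ 2) ∧
    ((volume (convexHull ℝ (Set.range z))).toReal / 4 * ∑ i : Fin 4, ‖φ (z i)‖ ^ 2
        ≤ 5 * ∫ x in convexHull ℝ (Set.range z), ‖φ x‖ ^ 2) := by
  exact stmt14' z hz φ

end
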